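/- arXiv:1910.02469 — 6 statements merged into one kernel-verified Lean document; each statement's English description precedes it below -/
import Mathlib

section
/- Let F be an n×n Metzler matrix (all off-diagonal entries nonnegative). If there exists a vector d with all entries strictly positive such that all entries of F·d are strictly negative, then F is Hurwitz, i.e., every eigenvalue of F has strictly negative real part. -/
open Matrix

/-- A real square matrix is Hurwitz if all its (complex) eigenvalues have
negative real part. -/
def IsHurwitz {n : ℕ} (A : Matrix (Fin n) (Fin n) ℝ) : Prop :=
  ∀ μ ∈ spectrum ℂ (A.map Complex.ofReal), μ.re < 0

/-- a Metzler matrix admitting a positive vector `d` with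
`F d < 0` entrywise is Hurwitz. -/
theorem metzler_pos_vector_implies_hurwitz {n : ℕ} (F : Matrix (Fin n) (Fin n) ℝ)
    (hMetzler : ∀ i j, i ≠ j → 0 ≤ F i j)
    (d : Fin n → ℝ) (hd : ∀ i, 0 < d i)
    (hFd : ∀ i, F.mulVec d i < 0) :
    IsHurwitz F := by
  intro μ hμ
  rw [← AlgEquiv.spectrum_eq (Matrix.toLinAlgEquiv' : Matrix (Fin n) (Fin n) ℂ ≃ₐ[ℂ] _),
      ← Module.End.hasEigenvalue_iff_mem_spectrum] at hμ
  obtain ⟨v, hv, hv0⟩ := hμ.exists_hasEigenvector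
  rw [Module.End.mem_eigenspace_iff] at hv
  have hev : ∀ k, ∑ j, (F k j : ℂ) * v j = μ * v k := by
    intro k
    have := congrFun hv k
    simpa [Matrix.toLinAlgEquiv'_apply, Matrix.toLin'_apply, Matrix.mulVec,
      dotProduct, Matrix.map_apply] using this
  obtain ⟨j₀, hj₀⟩ := Function.ne_iff.mp hv0
  obtain ⟨i, -, hi⟩ := Finset.exists_max_image Finset.univ (fun j => ‖v j‖ / d j)
    ⟨j₀, Finset.mem_univ j₀⟩
  set c : ℝ := ‖v i‖ / d i with hc
  have hcpos : 0 < c := by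
    have h1 : ‖v j₀‖ / d j₀ ≤ c := hi j₀ (Finset.mem_univ j₀)
    have h2 : 0 < ‖v j₀‖ / d j₀ := div_pos (norm_pos_iff.mpr hj₀) (hd j₀)
    linarith
  have key : ∀ j, ‖v j‖ ≤ c * d j :=
    fun j => (div_le_iff₀ (hd j)).mp (hi j (Finset.mem_univ j))
  have hvi : ‖v i‖ = c * d i := (div_mul_cancel₀ ‖v i‖ (hd i).ne').symm
  have hvipos : 0 < ‖v i‖ := by rw [hvi]; exact mul_pos hcpos (hd i)
  -- the Gershgorin-type estimate
  have hsplit : (μ - (F i i : ℂ)) * v i = ∑ j ∈ Finset.univ.erase i, (F i j : ℂ) * v j := by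
    have h := hev i
    rw [← Finset.add_sum_erase _ _ (Finset.mem_univ i)] at h
    linear_combination -h
  have hbound : ‖μ - (F i i : ℂ)‖ * ‖v i‖ < (-F i i) * ‖v i‖ := by
    have h1 : ‖(μ - (F i i : ℂ)) * v i‖ ≤ ∑ j ∈ Finset.univ.erase i, F i j * (c * d j) := by
      rw [hsplit]
      refine (norm_sum_le _ _).trans (Finset.sum_le_sum fun j hj => ?_)
      have hji : j ≠ i := Finset.ne_of_mem_erase hj
      have hF : 0 ≤ F i j := hMetzler i j (Ne.symm hji)
      rw [norm_mul, Complex.norm_real, Real.norm_of_nonneg hF]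
      exact mul_le_mul_of_nonneg_left (key j) hF
    have hm : F.mulVec d i = F i i * d i + ∑ j ∈ Finset.univ.erase i, F i j * d j := by
      have : F.mulVec d i = ∑ j, F i j * d j := rfl
      rw [this, ← Finset.add_sum_erase _ _ (Finset.mem_univ i)]
    have h2 : ∑ j ∈ Finset.univ.erase i, F i j * (c * d j)
        = c * (F.mulVec d i - F i i * d i) := by
      rw [hm, add_sub_cancel_left, Finset.mul_sum]
      exact Finset.sum_congr rfl fun j _ => by ring
    have h3 : c * (F.mulVec d i - F i i * d i) < c * (-F i i * d i) := by
      apply mul_lt_mul_of_pos_left _ hcpos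
      have := hFd i
      linarith
    calc ‖μ - (F i i : ℂ)‖ * ‖v i‖ = ‖(μ - (F i i : ℂ)) * v i‖ := (norm_mul _ _).symm
    _ ≤ ∑ j ∈ Finset.univ.erase i, F i j * (c * d j) := h1
    _ < c * (-F i i * d i) := by rw [h2]; exact h3
    _ = (-F i i) * ‖v i‖ := by rw [hvi]; ring
  have habs : ‖μ - (F i i : ℂ)‖ < -F i i :=
    lt_of_mul_lt_mul_right (by linarith [hbound]) hvipos.le
  have hre : μ.re - F i i ≤ ‖μ - (F i i : ℂ)‖ := by
    have := Complex.re_le_norm (μ - (F i i : ℂ))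
    simpa using this
  linarith
end

section
/- Let F be an n×n Metzler Hurwitz matrix. Then there exists a diagonal positive definite matrix P such that P F + Fᵀ P is negative definite. -/
open Matrix

open Filter

section Helpers

variable {n : ℕ}


lemma simplex_compact (n : ℕ) :
    IsCompact {v : Fin n → ℝ | (∀ i, 0 ≤ v i) ∧ ∑ i, v i = 1} := by
  have hsub : {v : Fin n → ℝ | (∀ i, 0 ≤ v i) ∧ ∑ i, v i = 1} ⊆
      Set.univ.pi (fun _ : Fin n => Set.Icc (0:ℝ) 1) := by
    rintro v ⟨h0, h1⟩ i _
    refine ⟨h0 i, ?_⟩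
    calc v i ≤ ∑ j, v j := Finset.single_le_sum (fun j _ => h0 j) (Finset.mem_univ i)
    _ = 1 := h1
  refine IsCompact.of_isClosed_subset (isCompact_univ_pi fun _ => isCompact_Icc) ?_ hsub
  have h1 : IsClosed {v : Fin n → ℝ | ∀ i, 0 ≤ v i} := by
    have : {v : Fin n → ℝ | ∀ i, 0 ≤ v i} = ⋂ i, (fun v : Fin n → ℝ => v i) ⁻¹' (Set.Ici 0) := by
      ext v; simp [Set.mem_iInter]
    rw [this]
    exact isClosed_iInter fun i => (isClosed_Ici).preimage (continuous_apply i)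
  have h2 : IsClosed {v : Fin n → ℝ | ∑ i, v i = 1} :=
    isClosed_eq (by continuity) continuous_const
  exact h1.inter h2

/-- Perron: a strictly positive matrix has a positive eigenvalue with strictly
positive eigenvector. -/
lemma exists_perron (hn : 0 < n) (C : Matrix (Fin n) (Fin n) ℝ)
    (hC : ∀ i j, 0 < C i j) :
    ∃ r : ℝ, 0 < r ∧ r ≤ ∑ i, ∑ j, C i j ∧ ∃ v : Fin n → ℝ,
      (∀ i, 0 < v i) ∧ (∑ i, v i = 1) ∧ C.mulVec v = r • v := by
  classical
  set K := {v : Fin n → ℝ | (∀ i, 0 ≤ v i) ∧ ∑ i, v i = 1} with hK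
  have hKne : ∀ v ∈ K, ∃ j, 0 < v j := by
    rintro v ⟨h0, h1⟩
    by_contra h
    push_neg at h
    have : ∀ j, v j = 0 := fun j => le_antisymm (h j) (h0 j)
    simp [this] at h1
  set T := {t : ℝ | ∃ v ∈ K, ∀ i, t * v i ≤ C.mulVec v i} with hT
  -- uniform vector
  have huniK : (fun _ : Fin n => (n:ℝ)⁻¹) ∈ K := by
    constructor
    · intro i; positivity
    · simp [Finset.sum_const]
      field_simp
  have hposmul : ∀ (v : Fin n → ℝ), (∀ i, 0 ≤ v i) → (∃ j, 0 < v j) →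
      ∀ i, 0 < C.mulVec v i := by
    intro v h0 ⟨j, hj⟩ i
    have : C i j * v j ≤ ∑ k, C i k * v k :=
      Finset.single_le_sum (fun k _ => mul_nonneg (hC i k).le (h0 k)) (Finset.mem_univ j)
    have h2 : 0 < C i j * v j := mul_pos (hC i j) hj
    calc (0:ℝ) < C i j * v j := h2
    _ ≤ ∑ k, C i k * v k := this
    _ = C.mulVec v i := rfl
  have hTne : T.Nonempty := by
    refine ⟨0, (fun _ : Fin n => (n:ℝ)⁻¹), huniK, fun i => ?_⟩
    rw [zero_mul]
    exact (hposmul _ huniK.1 ⟨⟨0, hn⟩, by positivity⟩ i).le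
  have hTbdd : BddAbove T := by
    refine ⟨∑ i, ∑ j, C i j, fun t ht => ?_⟩
    obtain ⟨v, hvK, hv⟩ := ht
    have h1 : t = ∑ i, t * v i := by rw [← Finset.mul_sum, hvK.2, mul_one]
    calc t = ∑ i, t * v i := h1
    _ ≤ ∑ i, C.mulVec v i := Finset.sum_le_sum fun i _ => hv i
    _ = ∑ i, ∑ j, C i j * v j := rfl
    _ ≤ ∑ i, ∑ j, C i j := by
        refine Finset.sum_le_sum fun i _ => Finset.sum_le_sum fun j _ => ?_
        have hvj : v j ≤ 1 := by
          calc v j ≤ ∑ k, v k := Finset.single_le_sum (fun k _ => hvK.1 k) (Finset.mem_univ j)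
          _ = 1 := hvK.2
        nlinarith [(hC i j), hvK.1 j]
  set r := sSup T with hr
  -- r ∈ T via compactness
  have hrT : r ∈ T := by
    have hseq : ∀ k : ℕ, ∃ t ∈ T, r - 1/(k+1) < t := by
      intro k
      refine exists_lt_of_lt_csSup hTne ?_
      have : (0:ℝ) < 1/(k+1) := by positivity
      linarith
    choose t ht hlt using hseq
    choose v hvK hv using fun k => ht k
    obtain ⟨v0, hv0K, φ, hφ, hconv⟩ := (simplex_compact n).tendsto_subseq hvK
    refine ⟨v0, hv0K, fun i => ?_⟩
    have htle : ∀ k, t k ≤ r := fun k => le_csSup hTbdd (ht k)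
    have htconv : Tendsto (fun k => t (φ k)) atTop (nhds r) := by
      have hlow : Tendsto (fun k : ℕ => r - 1/(k+1)) atTop (nhds r) := by
        have : Tendsto (fun k : ℕ => 1/((k:ℝ)+1)) atTop (nhds 0) :=
          tendsto_one_div_add_atTop_nhds_zero_nat
        simpa using tendsto_const_nhds.sub this
      refine tendsto_of_tendsto_of_tendsto_of_le_of_le (g := fun k : ℕ => r - 1/(φ k+1))
        (h := fun _ => r) ?_ tendsto_const_nhds (fun k => (hlt (φ k)).le) (fun k => htle (φ k))
      refine hlow.comp (hφ.tendsto_atTop)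
    have hvconv : ∀ j, Tendsto (fun k => v (φ k) j) atTop (nhds (v0 j)) := by
      intro j
      exact ((continuous_apply j).tendsto v0).comp hconv
    have hL : Tendsto (fun k => t (φ k) * v (φ k) i) atTop (nhds (r * v0 i)) :=
      htconv.mul (hvconv i)
    have hR : Tendsto (fun k => C.mulVec (v (φ k)) i) atTop (nhds (C.mulVec v0 i)) := by
      have : ∀ w : Fin n → ℝ, C.mulVec w i = ∑ j, C i j * w j := fun w => rfl
      simp only [this]
      exact tendsto_finset_sum _ fun j _ => tendsto_const_nhds.mul (hvconv j)
    exact le_of_tendsto_of_tendsto' hL hR fun k => hv (φ k) i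
  obtain ⟨vs, hvsK, hvs⟩ := hrT
  have hne : (Finset.univ : Finset (Fin n)).Nonempty := by
    simpa [Finset.univ_nonempty_iff] using Fin.pos_iff_nonempty.mp hn
  -- r > 0
  have hrpos : 0 < r := by
    set u : Fin n → ℝ := fun _ => (n:ℝ)⁻¹ with hu
    set t0 := Finset.univ.inf' hne (fun i => (n:ℝ) * C.mulVec u i) with ht0
    have hupos : ∀ i, 0 < C.mulVec u i :=
      hposmul u huniK.1 ⟨⟨0, hn⟩, by positivity⟩
    have ht0pos : 0 < t0 := by
      rw [ht0, Finset.lt_inf'_iff]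
      intro i _
      have := hupos i
      have hn' : (0:ℝ) < n := by exact_mod_cast hn
      positivity
    have ht0T : t0 ∈ T := by
      refine ⟨u, huniK, fun i => ?_⟩
      have h1 : t0 ≤ (n:ℝ) * C.mulVec u i := Finset.inf'_le _ (Finset.mem_univ i)
      have hn' : (0:ℝ) < n := by exact_mod_cast hn
      have : u i = (n:ℝ)⁻¹ := rfl
      rw [this]
      rw [mul_inv_le_iff₀ hn']
      linarith [h1]
    exact lt_of_lt_of_le ht0pos (le_csSup hTbdd ht0T)
  -- bootstrap: C vs = r • vs
  set u := C.mulVec vs with hudef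
  have hupos : ∀ i, 0 < u i := hposmul vs hvsK.1 (hKne vs hvsK)
  have heig : u = r • vs := by
    by_contra hne2
    have hex : ∃ i0, r * vs i0 < u i0 := by
      by_contra h
      push_neg at h
      apply hne2
      funext i
      have := hvs i
      have := h i
      simp only [Pi.smul_apply, smul_eq_mul]
      linarith
    obtain ⟨i0, hi0⟩ := hex
    set γ := u i0 - r * vs i0 with hγ
    have hγpos : 0 < γ := by simp [hγ]; linarith
    have hkey : ∀ i, r * u i + C i i0 * γ ≤ C.mulVec u i := by
      intro i
      have h1 : ∀ j, r * vs j ≤ u j := fun j => hvs j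
      have h2 : C i i0 * γ ≤ ∑ j, C i j * (u j - r * vs j) := by
        refine Finset.single_le_sum (f := fun j => C i j * (u j - r * vs j))
          (fun j _ => mul_nonneg (hC i j).le (by linarith [h1 j])) (Finset.mem_univ i0)
      have h3 : ∑ j, C i j * (u j - r * vs j) = C.mulVec u i - r * C.mulVec vs i := by
        simp only [mulVec, dotProduct, Finset.mul_sum]
        rw [← Finset.sum_sub_distrib]
        congr 1
        funext j
        ring
      have h4 : C.mulVec vs i = u i := rfl
      rw [h3, h4] at h2
      linarith
    set δ := Finset.univ.inf' hne (fun i => C i i0 * γ / u i) with hδ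
    have hδpos : 0 < δ := by
      rw [hδ, Finset.lt_inf'_iff]
      intro i _
      have := hC i i0
      have := hupos i
      positivity
    have hineq : ∀ i, (r + δ) * u i ≤ C.mulVec u i := by
      intro i
      have h1 : δ ≤ C i i0 * γ / u i := Finset.inf'_le _ (Finset.mem_univ i)
      have h2 : δ * u i ≤ C i i0 * γ := by
        rw [div_eq_mul_inv] at h1
        have := hupos i
        calc δ * u i ≤ (C i i0 * γ * (u i)⁻¹) * u i := by nlinarith
        _ = C i i0 * γ := by field_simp
      have := hkey i
      nlinarith
    -- normalize u
    set σ := ∑ i, u i with hσ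
    have hσpos : 0 < σ := Finset.sum_pos (fun i _ => hupos i) hne
    have hwK : σ⁻¹ • u ∈ K := by
      constructor
      · intro i
        simp only [Pi.smul_apply, smul_eq_mul]
        have := hupos i
        have := hσpos
        positivity
      · simp only [Pi.smul_apply, smul_eq_mul, ← Finset.mul_sum, ← hσ]
        field_simp
    have hrδT : r + δ ∈ T := by
      refine ⟨σ⁻¹ • u, hwK, fun i => ?_⟩
      have hmv : C.mulVec (σ⁻¹ • u) i = σ⁻¹ * C.mulVec u i := by
        rw [Matrix.mulVec_smul]
        rfl
      rw [hmv]
      have := hineq i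
      have hσi : 0 < σ⁻¹ := by positivity
      simp only [Pi.smul_apply, smul_eq_mul]
      nlinarith
    have : r + δ ≤ r := le_csSup hTbdd hrδT
    linarith
  refine ⟨r, hrpos, ?_, vs, fun i => ?_, hvsK.2, heig⟩
  · refine csSup_le hTne ?_
    intro t ht
    obtain ⟨v, hvK, hv⟩ := ht
    have h1 : t = ∑ i, t * v i := by rw [← Finset.mul_sum, hvK.2, mul_one]
    calc t = ∑ i, t * v i := h1
    _ ≤ ∑ i, C.mulVec v i := Finset.sum_le_sum fun i _ => hv i
    _ = ∑ i, ∑ j, C i j * v j := rfl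
    _ ≤ ∑ i, ∑ j, C i j := by
        refine Finset.sum_le_sum fun i _ => Finset.sum_le_sum fun j _ => ?_
        have hvj : v j ≤ 1 := by
          calc v j ≤ ∑ k, v k := Finset.single_le_sum (fun k _ => hvK.1 k) (Finset.mem_univ j)
          _ = 1 := hvK.2
        nlinarith [(hC i j), hvK.1 j]
  · have := hupos i
    have h2 : u i = r * vs i := by rw [heig]; rfl
    nlinarith

lemma exists_subinvariant (hn : 0 < n) (B : Matrix (Fin n) (Fin n) ℝ)
    (hB : ∀ i j, 0 ≤ B i j) (s : ℝ)
    (hspec : ∀ (L : ℝ) (v : Fin n → ℝ), v ≠ 0 → B.mulVec v = L • v → L < s) :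
    ∃ v : Fin n → ℝ, (∀ i, 0 < v i) ∧ ∀ i, B.mulVec v i < s * v i := by
  classical
  set C : ℕ → Matrix (Fin n) (Fin n) ℝ :=
    fun k => Matrix.of (fun i j => B i j + 1/(k+1)) with hCdef
  have hCpos : ∀ k i j, 0 < C k i j := by
    intro k i j
    have := hB i j
    have : (0:ℝ) < 1/((k:ℝ)+1) := by positivity
    simp only [hCdef, Matrix.of_apply]
    have := hB i j
    linarith
  have hmv : ∀ k (v : Fin n → ℝ), (∑ j, v j = 1) →
      ∀ i, (C k).mulVec v i = B.mulVec v i + 1/(k+1) := by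
    intro k v hsum i
    simp only [hCdef, mulVec, dotProduct, Matrix.of_apply]
    have : ∀ j ∈ Finset.univ, (B i j + 1/((k:ℝ)+1)) * v j
        = B i j * v j + 1/((k:ℝ)+1) * v j := fun j _ => by ring
    rw [Finset.sum_congr rfl this, Finset.sum_add_distrib, ← Finset.mul_sum, hsum, mul_one]
  -- main contradiction argument
  by_contra hcon
  push_neg at hcon
  have hkey : ∀ k : ℕ, ∃ r : ℝ, s < r ∧ r ≤ (∑ i, ∑ j, B i j) + n*n ∧
      ∃ v : Fin n → ℝ, (∀ i, 0 ≤ v i) ∧ (∑ i, v i = 1) ∧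
        ∀ i, B.mulVec v i + 1/(k+1) = r * v i := by
    intro k
    obtain ⟨r, hrpos, hrle, v, hvpos, hvsum, heig⟩ := exists_perron hn (C k) (hCpos k)
    refine ⟨r, ?_, ?_, v, fun i => (hvpos i).le, hvsum, fun i => ?_⟩
    · -- if r ≤ s we contradict hcon
      by_contra hrs
      push_neg at hrs
      obtain ⟨i, hi⟩ := hcon v hvpos
      have h1 : (C k).mulVec v i = r * v i := by rw [heig]; rfl
      rw [hmv k v hvsum i] at h1
      have h2 : (0:ℝ) < 1/((k:ℝ)+1) := by positivity
      nlinarith [hvpos i]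
    · calc r ≤ ∑ i, ∑ j, C k i j := hrle
      _ ≤ ∑ i, ∑ j, (B i j + 1) := by
          refine Finset.sum_le_sum fun i _ => Finset.sum_le_sum fun j _ => ?_
          simp only [hCdef, Matrix.of_apply]
          have : 1/((k:ℝ)+1) ≤ 1 := by
            rw [div_le_one (by positivity)]
            simp
          linarith
      _ = (∑ i, ∑ j, B i j) + n*n := by
          simp [Finset.sum_add_distrib, Finset.sum_const]
    · have h1 : (C k).mulVec v i = r * v i := by rw [heig]; rfl
      rw [hmv k v hvsum i] at h1
      exact h1
  choose r hrgt hrle v hvpos hvsum heig using hkey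
  -- compactness: subsequence where v converges, then where r converges
  have hvmem : ∀ k, v k ∈ {v : Fin n → ℝ | (∀ i, 0 ≤ v i) ∧ ∑ i, v i = 1} :=
    fun k => ⟨hvpos k, hvsum k⟩
  obtain ⟨v0, hv0K, φ, hφ, hvconv⟩ := (simplex_compact n).tendsto_subseq hvmem
  obtain ⟨L, hLmem, ψ, hψ, hrconv⟩ := (isCompact_Icc (a := s) (b := (∑ i, ∑ j, B i j) + n*n)).tendsto_subseq
    (x := fun k => r (φ k)) (fun k => ⟨(hrgt (φ k)).le, hrle (φ k)⟩)
  set θ : ℕ → ℕ := fun k => φ (ψ k) with hθ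
  have hθmono : StrictMono θ := hφ.comp hψ
  have hvconv2 : ∀ j, Tendsto (fun k => v (θ k) j) atTop (nhds (v0 j)) := by
    intro j
    exact (((continuous_apply j).tendsto v0).comp hvconv).comp hψ.tendsto_atTop
  -- limit eigen equation
  have hBv0 : B.mulVec v0 = L • v0 := by
    funext i
    have hL1 : Tendsto (fun k => B.mulVec (v (θ k)) i + 1/((θ k:ℝ)+1)) atTop
        (nhds (B.mulVec v0 i)) := by
      have h1 : Tendsto (fun k => B.mulVec (v (θ k)) i) atTop (nhds (B.mulVec v0 i)) := by
        have : ∀ (w : Fin n → ℝ), B.mulVec w i = ∑ j, B i j * w j := fun w => rfl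
        simp only [this]
        exact tendsto_finset_sum _ fun j _ => tendsto_const_nhds.mul (hvconv2 j)
      have h2 : Tendsto (fun k => 1/((θ k:ℝ)+1)) atTop (nhds 0) := by
        have hbase : Tendsto (fun k : ℕ => 1/((k:ℝ)+1)) atTop (nhds 0) :=
          tendsto_one_div_add_atTop_nhds_zero_nat
        exact hbase.comp hθmono.tendsto_atTop
      simpa using h1.add h2
    have hL2 : Tendsto (fun k => r (θ k) * v (θ k) i) atTop (nhds (L * v0 i)) := by
      exact (hrconv.comp (tendsto_id)).mul (hvconv2 i)
    have heq : (fun k => B.mulVec (v (θ k)) i + 1/((θ k:ℝ)+1))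
        = fun k => r (θ k) * v (θ k) i := funext fun k => heig (θ k) i
    rw [heq] at hL1
    have := tendsto_nhds_unique hL1 hL2
    simpa [Pi.smul_apply, smul_eq_mul] using this
  have hv0ne : v0 ≠ 0 := by
    intro h
    rw [h] at hv0K
    obtain ⟨_, hsum1⟩ := hv0K
    simp at hsum1
  have := hspec L v0 hv0ne hBv0
  have hLs : s ≤ L := hLmem.1
  linarith

lemma real_eig_mem_spectrum (A : Matrix (Fin n) (Fin n) ℝ) (L : ℝ) (v : Fin n → ℝ)
    (hv : v ≠ 0) (h : A.mulVec v = L • v) :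
    (L : ℂ) ∈ spectrum ℂ (A.map Complex.ofReal) := by
  classical
  rw [spectrum.mem_iff]
  set M := algebraMap ℂ (Matrix (Fin n) (Fin n) ℂ) (L:ℂ) - A.map Complex.ofReal with hM
  rw [Matrix.isUnit_iff_isUnit_det]
  intro hdet
  have hdet0 : M.det = 0 := by
    rw [← Matrix.exists_mulVec_eq_zero_iff]
    refine ⟨fun i => (v i : ℂ), ?_, ?_⟩
    · intro hc
      apply hv
      funext i
      have := congrFun hc i
      simpa using this
    · rw [hM, Matrix.sub_mulVec, Algebra.algebraMap_eq_smul_one, Matrix.smul_mulVec,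
        Matrix.one_mulVec]
      funext i
      have h1 : (A.map Complex.ofReal).mulVec (fun i => (v i : ℂ)) i
          = ((A.mulVec v i : ℝ) : ℂ) := by
        simp only [mulVec, dotProduct, Matrix.map_apply]
        push_cast
        rfl
      have h2 := congrFun h i
      simp only [Pi.smul_apply, smul_eq_mul] at h2
      simp only [Pi.sub_apply, Pi.smul_apply, Pi.zero_apply, smul_eq_mul]
      rw [h1, h2]
      push_cast
      ring
  rw [hdet0] at hdet
  exact (by simpa using hdet : False)

lemma isHurwitz_transpose (F : Matrix (Fin n) (Fin n) ℝ) (h : IsHurwitz F) :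
    IsHurwitz Fᵀ := by
  intro μ hμ
  apply h
  rw [spectrum.mem_iff] at hμ ⊢
  intro hUnit
  apply hμ
  have key : algebraMap ℂ (Matrix (Fin n) (Fin n) ℂ) μ - Fᵀ.map Complex.ofReal
      = (algebraMap ℂ (Matrix (Fin n) (Fin n) ℂ) μ - F.map Complex.ofReal)ᵀ := by
    rw [Matrix.transpose_sub, Matrix.transpose_map]
    congr 1
    rw [Algebra.algebraMap_eq_smul_one, Matrix.transpose_smul, Matrix.transpose_one]
  rw [key, Matrix.isUnit_iff_isUnit_det, Matrix.det_transpose,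
    ← Matrix.isUnit_iff_isUnit_det]
  exact hUnit

/-- A symmetric Metzler matrix with a positive vector mapped to a negative
vector is negative definite. -/
lemma neg_posDef_of_symm_metzler (S : Matrix (Fin n) (Fin n) ℝ)
    (hsym : Sᵀ = S) (hoff : ∀ i j, i ≠ j → 0 ≤ S i j)
    (v : Fin n → ℝ) (hv : ∀ i, 0 < v i) (hSv : ∀ i, S.mulVec v i < 0) :
    (-S).PosDef := by
  classical
  rw [Matrix.posDef_iff_dotProduct_mulVec]
  constructor
  · show (-S)ᴴ = -S
    have : (-S)ᴴ = (-S)ᵀ := rfl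
    rw [this, Matrix.transpose_neg, hsym]
  · intro x hx
    set y : Fin n → ℝ := fun i => x i / v i with hy
    have hxy : ∀ i, x i = v i * y i := by
      intro i
      rw [hy]
      rw [mul_comm (v i) (x i / v i), div_mul_cancel₀ _ (hv i).ne']
    have key : x ⬝ᵥ S.mulVec x ≤ ∑ i, y i ^ 2 * v i * S.mulVec v i := by
      have expand : x ⬝ᵥ S.mulVec x = ∑ i, ∑ j, S i j * x i * x j := by
        simp only [dotProduct, mulVec, Finset.mul_sum]
        refine Finset.sum_congr rfl fun i _ => Finset.sum_congr rfl fun j _ => by ring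
      have bound : ∀ i j, S i j * x i * x j ≤ S i j * v i * v j * (y i^2 + y j^2) / 2 := by
        intro i j
        by_cases hij : i = j
        · subst hij
          rw [hxy i]
          ring_nf
          exact le_of_eq (by ring)
        · have h1 : 0 ≤ S i j := hoff i j hij
          have h2 : y i * y j ≤ (y i^2 + y j^2)/2 := by nlinarith [sq_nonneg (y i - y j)]
          have h3 : 0 < v i * v j := mul_pos (hv i) (hv j)
          rw [hxy i, hxy j]
          calc S i j * (v i * y i) * (v j * y j) = S i j * (v i * v j) * (y i * y j) := by ring
          _ ≤ S i j * (v i * v j) * ((y i^2 + y j^2)/2) :=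
              mul_le_mul_of_nonneg_left h2 (mul_nonneg h1 h3.le)
          _ = S i j * v i * v j * (y i^2 + y j^2) / 2 := by ring
      have step1 : x ⬝ᵥ S.mulVec x ≤ ∑ i, ∑ j, S i j * v i * v j * (y i^2 + y j^2) / 2 := by
        rw [expand]
        exact Finset.sum_le_sum fun i _ => Finset.sum_le_sum fun j _ => bound i j
      have step2 : ∑ i, ∑ j, S i j * v i * v j * (y i^2 + y j^2) / 2
          = ∑ i, y i ^ 2 * v i * S.mulVec v i := by
        have split : ∀ i j, S i j * v i * v j * (y i^2 + y j^2) / 2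
            = S i j * v i * v j * y i^2 / 2 + S i j * v i * v j * y j^2 / 2 :=
          fun i j => by ring
        simp only [split, Finset.sum_add_distrib]
        have swap : ∑ i, ∑ j, S i j * v i * v j * y j^2 / 2
            = ∑ i, ∑ j, S i j * v i * v j * y i^2 / 2 := by
          rw [Finset.sum_comm]
          refine Finset.sum_congr rfl fun i _ => Finset.sum_congr rfl fun j _ => ?_
          have hS : S j i = S i j := by
            conv_lhs => rw [← hsym]
            rfl
          rw [hS]
          ring
        rw [swap, ← Finset.sum_add_distrib]
        refine Finset.sum_congr rfl fun i _ => ?_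
        have : ∀ j, S i j * v i * v j * y i^2 / 2 + S i j * v i * v j * y i^2 / 2
            = y i^2 * v i * (S i j * v j) := fun j => by ring
        rw [← Finset.sum_add_distrib, Finset.sum_congr rfl fun j _ => this j,
          ← Finset.mul_sum]
        rfl
      linarith [step2 ▸ step1]
    have neg : ∑ i, y i ^ 2 * v i * S.mulVec v i < 0 := by
      obtain ⟨i0, hi0⟩ : ∃ i0, x i0 ≠ 0 := by
        by_contra hc
        push_neg at hc
        exact hx (funext hc)
      have hy0 : y i0 ≠ 0 := by
        rw [hy]
        exact div_ne_zero hi0 (hv i0).ne'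
      have hlt := Finset.sum_lt_sum (f := fun i => y i^2 * v i * S.mulVec v i)
        (g := fun _ => (0:ℝ)) (s := Finset.univ)
        (fun i _ => mul_nonpos_of_nonneg_of_nonpos
          (mul_nonneg (sq_nonneg _) (hv i).le) (hSv i).le)
        ⟨i0, Finset.mem_univ i0,
          mul_neg_of_pos_of_neg (mul_pos (by positivity) (hv i0)) (hSv i0)⟩
      simpa using hlt
    have : x ⬝ᵥ (-S).mulVec x = -(x ⬝ᵥ S.mulVec x) := by
      rw [Matrix.neg_mulVec, dotProduct_neg]
    rw [show star x = x from rfl]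
    rw [this]
    linarith

/-- Hurwitz Metzler matrices admit a positive vector `v` with `F v < 0`. -/
lemma exists_pos_vec (hn : 0 < n) (F : Matrix (Fin n) (Fin n) ℝ)
    (hMetzler : ∀ i j, i ≠ j → 0 ≤ F i j) (hHurwitz : IsHurwitz F) :
    ∃ v : Fin n → ℝ, (∀ i, 0 < v i) ∧ ∀ i, F.mulVec v i < 0 := by
  classical
  have hne : (Finset.univ : Finset (Fin n)).Nonempty := by
    simpa [Finset.univ_nonempty_iff] using Fin.pos_iff_nonempty.mp hn
  set s : ℝ := 1 + Finset.univ.sup' hne (fun i => -(F i i)) with hs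
  set B : Matrix (Fin n) (Fin n) ℝ := F + s • (1 : Matrix (Fin n) (Fin n) ℝ) with hBdef
  have hBmv : ∀ (v : Fin n → ℝ), B.mulVec v = F.mulVec v + s • v := by
    intro v
    rw [hBdef, Matrix.add_mulVec, Matrix.smul_mulVec, Matrix.one_mulVec]
  have hB : ∀ i j, 0 ≤ B i j := by
    intro i j
    simp only [hBdef, Matrix.add_apply, Matrix.smul_apply, smul_eq_mul]
    by_cases hij : i = j
    · subst hij
      have h1 : -(F i i) ≤ Finset.univ.sup' hne (fun k => -(F k k)) :=
        Finset.le_sup' (fun k => -(F k k)) (Finset.mem_univ i)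
      rw [Matrix.one_apply_eq, mul_one, hs]
      linarith
    · rw [Matrix.one_apply_ne hij, mul_zero, add_zero]
      exact hMetzler i j hij
  have hspec : ∀ (L : ℝ) (v : Fin n → ℝ), v ≠ 0 → B.mulVec v = L • v → L < s := by
    intro L v hv hBv
    have hFv : F.mulVec v = (L - s) • v := by
      rw [hBmv] at hBv
      funext i
      have := congrFun hBv i
      simp only [Pi.add_apply, Pi.smul_apply, smul_eq_mul] at this ⊢
      linarith
    have := hHurwitz ((L - s : ℝ) : ℂ) (real_eig_mem_spectrum F (L - s) v hv hFv)
    simp only [Complex.ofReal_re] at this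
    linarith
  obtain ⟨v, hvpos, hv⟩ := exists_subinvariant hn B hB s hspec
  refine ⟨v, hvpos, fun i => ?_⟩
  have := hv i
  rw [hBmv] at this
  simp only [Pi.add_apply, Pi.smul_apply, smul_eq_mul] at this
  linarith

end Helpers

/-- a Metzler Hurwitz matrix admits a diagonal positive definite
solution `P` to the Lyapunov inequality `P F + Fᵀ P ≺ 0`. -/
theorem metzler_hurwitz_diagonal_lyapunov {n : ℕ} (F : Matrix (Fin n) (Fin n) ℝ)
    (hMetzler : ∀ i j, i ≠ j → 0 ≤ F i j)
    (hHurwitz : IsHurwitz F) :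
    ∃ p : Fin n → ℝ, (∀ i, 0 < p i) ∧
      (-(Matrix.diagonal p * F + Fᵀ * Matrix.diagonal p)).PosDef := by
  classical
  rcases Nat.eq_zero_or_pos n with hn | hn
  · subst hn
    refine ⟨fun _ => 1, fun i => one_pos, ?_, ?_⟩
    · show _ᴴ = _
      ext i j
      exact i.elim0
    · intro x hx
      exact absurd (Finsupp.ext fun i => Fin.elim0 i) hx
  · obtain ⟨v, hvpos, hFv⟩ := exists_pos_vec hn F hMetzler hHurwitz
    obtain ⟨w, hwpos, hFw⟩ := exists_pos_vec hn Fᵀ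
      (fun i j hij => hMetzler j i (Ne.symm hij)) (isHurwitz_transpose F hHurwitz)
    set p : Fin n → ℝ := fun i => w i / v i with hp
    have hppos : ∀ i, 0 < p i := fun i => div_pos (hwpos i) (hvpos i)
    have hpv : ∀ i, p i * v i = w i := fun i => div_mul_cancel₀ _ (hvpos i).ne'
    set S := Matrix.diagonal p * F + Fᵀ * Matrix.diagonal p with hS
    have hentry : ∀ i j, S i j = p i * F i j + F j i * p j := by
      intro i j
      simp [hS, Matrix.add_apply, Matrix.diagonal_mul, Matrix.mul_diagonal,
        Matrix.transpose_apply]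
    have hsym : Sᵀ = S := by
      ext i j
      rw [Matrix.transpose_apply, hentry j i, hentry i j]
      ring
    have hoff : ∀ i j, i ≠ j → 0 ≤ S i j := by
      intro i j hij
      rw [hentry i j]
      have h1 := hMetzler i j hij
      have h2 := hMetzler j i (Ne.symm hij)
      have := (hppos i).le
      have := (hppos j).le
      positivity
    have hSv : ∀ i, S.mulVec v i < 0 := by
      intro i
      have hcomp : S.mulVec v i = p i * F.mulVec v i + Fᵀ.mulVec w i := by
        simp only [mulVec, dotProduct]
        rw [show (∑ j, S i j * v j) = ∑ j, (p i * (F i j * v j)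
            + Fᵀ i j * (p j * v j)) from Finset.sum_congr rfl fun j _ => by
          rw [hentry i j, Matrix.transpose_apply]; ring]
        rw [Finset.sum_add_distrib, ← Finset.mul_sum]
        congr 1
        exact Finset.sum_congr rfl fun j _ => by rw [hpv j]
      rw [hcomp]
      have h1 := hFv i
      have h2 := hFw i
      have h3 := hppos i
      nlinarith
    exact ⟨p, hppos, neg_posDef_of_symm_metzler S hsym hoff v hvpos hSv⟩
end

section
/- Let A be a real n×n Hurwitz matrix, P a symmetric positive definite n×n matrix, B an n×m real matrix, and γ > 0 a scalar such that P A + Aᵀ P + γ I + (1/γ) P B Bᵀ P ⪯ 0. Then for every ω ∈ ℝ, the largest singular value of (iωI − A)⁻¹ B is at most 1, i.e., sup over ω ∈ ℝ of ‖(iωI − A)⁻¹B‖₂ ≤ 1. -/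
open Matrix

noncomputable def opNorm {m n : Type*} [Fintype m] [Fintype n] [DecidableEq n]
    (M : Matrix m n ℂ) : ℝ :=
  ‖LinearMap.toContinuousLinearMap (Matrix.toEuclideanLin M)‖

lemma star_map_mulVec {a b : ℕ} (R : Matrix (Fin a) (Fin b) ℝ) (v : Fin b → ℂ) :
    star ((R.map Complex.ofReal) *ᵥ v) = (R.map Complex.ofReal) *ᵥ (star v) := by
  funext i
  simp [Matrix.mulVec, dotProduct, Pi.star_apply, map_sum, Matrix.map_apply,
    mul_comm]

lemma re_quad_nonneg {n : ℕ} {Q : Matrix (Fin n) (Fin n) ℝ} (hQ : Q.PosSemidef)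
    (x : Fin n → ℂ) : 0 ≤ (dotProduct (star x) ((Q.map Complex.ofReal) *ᵥ x)).re := by
  have key : (dotProduct (star x) ((Q.map Complex.ofReal) *ᵥ x)).re
      = dotProduct (fun i => (x i).re) (Q *ᵥ fun i => (x i).re)
        + dotProduct (fun i => (x i).im) (Q *ᵥ fun i => (x i).im) := by
    simp only [dotProduct, Matrix.mulVec, Matrix.map_apply, Finset.mul_sum,
      Complex.re_sum, Pi.star_apply, Complex.mul_re, Complex.ofReal_re, Complex.ofReal_im,
      Complex.conj_re, Complex.conj_im, RingHom.coe_coe]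
    rw [← Finset.sum_add_distrib]
    apply Finset.sum_congr rfl
    intro i _
    rw [← Finset.sum_add_distrib]
    apply Finset.sum_congr rfl
    intro j _
    simp only [Complex.star_def, Complex.mul_im, Complex.conj_re, Complex.conj_im,
      Complex.ofReal_re, Complex.ofReal_im]
    ring
  rw [key]
  have h1 := hQ.dotProduct_mulVec_nonneg (fun i => (x i).re)
  have h2 := hQ.dotProduct_mulVec_nonneg (fun i => (x i).im)
  simp only [star_trivial] at h1 h2
  positivity

lemma re_dot_self {k : ℕ} (v : Fin k → ℂ) :
    (dotProduct (star v) v).re = ∑ i, ‖v i‖ ^ 2 := by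
  simp only [dotProduct, Complex.re_sum, Pi.star_apply]
  refine Finset.sum_congr rfl fun i _ => ?_
  rw [Complex.star_def, mul_comm, Complex.mul_conj]
  simp only [Complex.normSq_eq_norm_sq]
  rw [Complex.ofReal_re]

lemma norm_symm_eq {k : ℕ} (v : Fin k → ℂ) :
    ‖(WithLp.equiv 2 (Fin k → ℂ)).symm v‖ = Real.sqrt ((dotProduct (star v) v).re) := by
  rw [EuclideanSpace.norm_eq, re_dot_self]
  rfl

set_option maxHeartbeats 1000000 in
/-- a Riccati-type Lyapunov inequality implies the frequency-domain
bound `‖(iωI − A)⁻¹B‖₂ ≤ 1` for all real `ω`. -/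
theorem hinf_bound_of_riccati {n m : ℕ} (A : Matrix (Fin n) (Fin n) ℝ)
    (P : Matrix (Fin n) (Fin n) ℝ) (B : Matrix (Fin n) (Fin m) ℝ) (γ : ℝ)
    (hHurwitz : IsHurwitz A) (hP : P.PosDef) (hPsym : P.IsSymm) (hγ : 0 < γ)
    (hRic : (-(P * A + Aᵀ * P + γ • (1 : Matrix (Fin n) (Fin n) ℝ)
      + γ⁻¹ • (P * B * Bᵀ * P))).PosSemidef) :
    ∀ ω : ℝ,
      opNorm ((((Complex.I * ω) • (1 : Matrix (Fin n) (Fin n) ℂ)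
        - A.map Complex.ofReal)⁻¹) * B.map Complex.ofReal) ≤ 1 := by
  intro ω
  set Ac := A.map Complex.ofReal with hAc
  set Pc := P.map Complex.ofReal with hPc
  set Bc := B.map Complex.ofReal with hBc
  set Mc := (Complex.I * (ω : ℂ)) • (1 : Matrix (Fin n) (Fin n) ℂ) - Ac with hMc
  -- invertibility
  have hspec : (Complex.I * (ω : ℂ)) ∉ spectrum ℂ Ac := by
    intro h
    have := hHurwitz _ h
    simp [Complex.mul_re] at this
  have hunit : IsUnit Mc := by
    have := spectrum.notMem_iff.mp hspec
    rwa [Algebra.algebraMap_eq_smul_one] at this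
  have hMcinv : Mc * Mc⁻¹ = 1 :=
    Matrix.mul_nonsing_inv Mc ((Matrix.isUnit_iff_isUnit_det Mc).mp hunit)
  -- reduce to vector bound
  unfold opNorm
  refine ContinuousLinearMap.opNorm_le_bound _ zero_le_one fun v => ?_
  rw [one_mul]
  set u : Fin m → ℂ := WithLp.equiv 2 (Fin m → ℂ) v with hu
  set x : Fin n → ℂ := (Mc⁻¹ * Bc) *ᵥ u with hx
  have happ : (LinearMap.toContinuousLinearMap (toEuclideanLin (Mc⁻¹ * Bc))) v
      = (WithLp.equiv 2 (Fin n → ℂ)).symm x := rfl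
  have hv : v = (WithLp.equiv 2 (Fin m → ℂ)).symm u := rfl
  rw [happ, hv, norm_symm_eq, norm_symm_eq]
  -- dynamics
  have hAx : Ac *ᵥ x = (Complex.I * (ω : ℂ)) • x - Bc *ᵥ u := by
    have h0 : (Complex.I * (ω : ℂ)) • x - Ac *ᵥ x = Bc *ᵥ u := by
      have : Mc *ᵥ x = Bc *ᵥ u := by
        rw [hx, Matrix.mulVec_mulVec, ← Matrix.mul_assoc, hMcinv, Matrix.one_mul]
      rw [hMc, Matrix.sub_mulVec, Matrix.smul_mulVec, Matrix.one_mulVec] at this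
      exact this
    rw [← h0]; abel
  -- symmetry helpers
  have hPcsym : Pcᵀ = Pc := by rw [hPc, ← Matrix.transpose_map, hPsym.eq]
  have hsymP : ∀ y z : Fin n → ℂ,
      dotProduct y (Pc *ᵥ z) = dotProduct (Pc *ᵥ y) z := by
    intro y z
    rw [Matrix.dotProduct_mulVec, ← Matrix.mulVec_transpose, hPcsym]
  set w : Fin m → ℂ := Bcᵀ *ᵥ (Pc *ᵥ x) with hw
  have hBt : Bcᵀ = Bᵀ.map Complex.ofReal := by rw [hBc, Matrix.transpose_map]
  have hstarw : star w = Bcᵀ *ᵥ (Pc *ᵥ star x) := by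
    rw [hw, hBt, star_map_mulVec, hPc, star_map_mulVec]
  have hc : ∀ z : Fin m → ℂ,
      dotProduct (star x) (Pc *ᵥ (Bc *ᵥ z)) = dotProduct (star w) z := by
    intro z
    rw [hsymP, Matrix.dotProduct_mulVec, hstarw, hBt, ← Matrix.mulVec_transpose,
      ← hBt]
  have hc2 : ∀ z : Fin m → ℂ,
      dotProduct (star (Bc *ᵥ z)) (Pc *ᵥ x) = dotProduct (star z) w := by
    intro z
    rw [hBc, star_map_mulVec, ← hBc, ← Matrix.vecMul_transpose, ← Matrix.dotProduct_mulVec,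
      ← hw]
  -- mapped Riccati matrix
  set Qr : Matrix (Fin n) (Fin n) ℝ :=
    -(P * A + Aᵀ * P + γ • (1 : Matrix (Fin n) (Fin n) ℝ) + γ⁻¹ • (P * B * Bᵀ * P)) with hQr
  have hQc : Qr.map Complex.ofReal
      = -(Pc * Ac + Acᵀ * Pc + (γ : ℂ) • (1 : Matrix (Fin n) (Fin n) ℂ)
          + ((γ : ℂ))⁻¹ • (Pc * Bc * Bcᵀ * Pc)) := by
    rw [hQr, hPc, hAc, hBc]
    ext i j
    simp only [Matrix.map_apply, Matrix.neg_apply, Matrix.add_apply, Matrix.smul_apply,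
      Matrix.mul_apply, Matrix.one_apply, Matrix.transpose_apply, smul_eq_mul]
    push_cast [apply_ite Complex.ofReal]
    ring_nf
  -- main identity
  have hE : dotProduct (star x) ((Qr.map Complex.ofReal) *ᵥ x)
      = (dotProduct (star w) u + dotProduct (star u) w)
        - (γ : ℂ) * dotProduct (star x) x
        - ((γ : ℂ))⁻¹ * dotProduct (star w) w := by
    rw [hQc]
    have t1 : dotProduct (star x) ((Pc * Ac) *ᵥ x)
        = Complex.I * (ω : ℂ) * dotProduct (star x) (Pc *ᵥ x)
          - dotProduct (star w) u := by
      rw [← Matrix.mulVec_mulVec, hAx, Matrix.mulVec_sub, Matrix.mulVec_smul,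
        dotProduct_sub, dotProduct_smul, smul_eq_mul, hc u]
    have t2 : dotProduct (star x) ((Acᵀ * Pc) *ᵥ x)
        = -(Complex.I * (ω : ℂ)) * dotProduct (star x) (Pc *ᵥ x)
          - dotProduct (star u) w := by
      have hstarc : star (Complex.I * (ω : ℂ)) = -(Complex.I * (ω : ℂ)) := by
        simp [Complex.star_def]
      rw [← Matrix.mulVec_mulVec, Matrix.dotProduct_mulVec, Matrix.vecMul_transpose,
        show Ac *ᵥ star x = star (Ac *ᵥ x) from by rw [hAc, star_map_mulVec],
        hAx, star_sub, star_smul, sub_dotProduct, smul_dotProduct,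
        hc2 u, hstarc, smul_eq_mul]
    have t3 : dotProduct (star x) (((γ : ℂ) • (1 : Matrix (Fin n) (Fin n) ℂ)) *ᵥ x)
        = (γ : ℂ) * dotProduct (star x) x := by
      rw [Matrix.smul_mulVec, Matrix.one_mulVec, dotProduct_smul, smul_eq_mul]
    have t4 : dotProduct (star x) ((((γ : ℂ))⁻¹ • (Pc * Bc * Bcᵀ * Pc)) *ᵥ x)
        = ((γ : ℂ))⁻¹ * dotProduct (star w) w := by
      rw [Matrix.smul_mulVec, dotProduct_smul, smul_eq_mul]
      congr 1
      have heq : Pc *ᵥ (Bc *ᵥ (Bcᵀ *ᵥ (Pc *ᵥ x))) = (Pc * Bc * Bcᵀ * Pc) *ᵥ x := by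
        rw [Matrix.mulVec_mulVec, Matrix.mulVec_mulVec, Matrix.mulVec_mulVec]
      rw [← heq, ← hw, hc w]
    rw [Matrix.neg_mulVec, dotProduct_neg, Matrix.add_mulVec, Matrix.add_mulVec,
      Matrix.add_mulVec, dotProduct_add, dotProduct_add, dotProduct_add,
      t1, t2, t3, t4]
    ring
  -- take real parts
  have hpos := re_quad_nonneg hRic x
  rw [hE] at hpos
  have hconj : (dotProduct (star u) w).re = (dotProduct (star w) u).re := by
    rw [Matrix.star_dotProduct]
    exact Complex.conj_re _
  set X := (dotProduct (star x) x).re with hX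
  set U := (dotProduct (star u) u).re with hU
  set W := (dotProduct (star w) w).re with hW
  set r := (dotProduct (star w) u).re with hr
  have hre : 0 ≤ 2 * r - γ * X - γ⁻¹ * W := by
    have : ((dotProduct (star w) u + dotProduct (star u) w)
        - (γ : ℂ) * dotProduct (star x) x
        - ((γ : ℂ))⁻¹ * dotProduct (star w) w).re
        = 2 * r - γ * X - γ⁻¹ * W := by
      simp only [Complex.sub_re, Complex.add_re, ← Complex.ofReal_inv,
        Complex.re_ofReal_mul, hconj]
      ring
    rw [this] at hpos
    exact hpos
  -- Cauchy-Schwarz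
  have hCS : r ≤ Real.sqrt W * Real.sqrt U := by
    have h := re_inner_le_norm (𝕜 := ℂ) ((WithLp.equiv 2 (Fin m → ℂ)).symm w)
      ((WithLp.equiv 2 (Fin m → ℂ)).symm u)
    rw [show inner ℂ ((WithLp.equiv 2 (Fin m → ℂ)).symm w) ((WithLp.equiv 2 (Fin m → ℂ)).symm u)
        = dotProduct (star w) u from by rw [dotProduct_comm]; rfl, norm_symm_eq, norm_symm_eq] at h
    exact h
  -- nonnegativity
  have hXnn : 0 ≤ X := by rw [hX, re_dot_self]; positivity
  have hUnn : 0 ≤ U := by rw [hU, re_dot_self]; positivity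
  have hWnn : 0 ≤ W := by rw [hW, re_dot_self]; positivity
  -- conclude
  apply Real.sqrt_le_sqrt
  have hsU : Real.sqrt U ^ 2 = U := Real.sq_sqrt hUnn
  have hsW : Real.sqrt W ^ 2 = W := Real.sq_sqrt hWnn
  have hγi : γ * γ⁻¹ = 1 := mul_inv_cancel₀ hγ.ne'
  nlinarith [sq_nonneg (γ * Real.sqrt U - Real.sqrt W), Real.sqrt_nonneg U,
    Real.sqrt_nonneg W, mul_pos hγ hγ, hγ.le]
end

section
/- Let F be an n×n Metzler Hurwitz matrix and let d, e ∈ ℝⁿ have strictly positive entries with F d < 0 entrywise and Fᵀ e < 0 entrywise. Then the diagonal matrix P = diag(e₁/d₁, …, eₙ/dₙ) is positive definite and satisfies P F + Fᵀ P ≺ 0 (negative definite). -/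
open Matrix

/-- for a Metzler Hurwitz matrix with `F d < 0`, `Fᵀ e < 0`
(`d, e > 0`), the diagonal matrix `P = diag(eᵢ/dᵢ)` is positive definite and
satisfies `P F + Fᵀ P ≺ 0`. -/
theorem diag_ratio_lyapunov {n : ℕ} (F : Matrix (Fin n) (Fin n) ℝ)
    (hMetzler : ∀ i j, i ≠ j → 0 ≤ F i j) (hHurwitz : IsHurwitz F)
    (d e : Fin n → ℝ) (hd : ∀ i, 0 < d i) (he : ∀ i, 0 < e i)
    (hFd : ∀ i, F.mulVec d i < 0) (hFe : ∀ i, Fᵀ.mulVec e i < 0) :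
    (Matrix.diagonal (fun i => e i / d i)).PosDef ∧
      (-(Matrix.diagonal (fun i => e i / d i) * F
        + Fᵀ * Matrix.diagonal (fun i => e i / d i))).PosDef := by
  set p : Fin n → ℝ := fun i => e i / d i with hp
  have hppos : ∀ i, 0 < p i := fun i => div_pos (he i) (hd i)
  set S : Matrix (Fin n) (Fin n) ℝ :=
    Matrix.diagonal p * F + Fᵀ * Matrix.diagonal p with hSdef
  have hSentry : ∀ i j, S i j = p i * F i j + F j i * p j := by
    intro i j
    simp [hSdef, Matrix.add_apply, Matrix.diagonal_mul, Matrix.mul_diagonal,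
      Matrix.transpose_apply]
  have hSsymm : ∀ i j, S j i = S i j := by
    intro i j; rw [hSentry, hSentry]; ring
  have hSoff : ∀ i j, i ≠ j → 0 ≤ S i j := by
    intro i j hij
    rw [hSentry]
    have h1 := hMetzler i j hij
    have h2 := hMetzler j i (Ne.symm hij)
    have := (hppos i).le
    have := (hppos j).le
    positivity
  -- S d < 0 entrywise
  have hSd : ∀ i, S.mulVec d i < 0 := by
    intro i
    have hpd : ∀ j, p j * d j = e j := by
      intro j; simp [hp, div_mul_cancel₀ _ (hd j).ne']
    have : S.mulVec d i = p i * F.mulVec d i + Fᵀ.mulVec e i := by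
      simp only [Matrix.mulVec, dotProduct, hSentry, Matrix.transpose_apply]
      rw [Finset.mul_sum, ← Finset.sum_add_distrib]
      congr 1; funext j
      rw [← hpd j]; ring
    rw [this]
    have h1 : p i * F.mulVec d i < 0 := mul_neg_of_pos_of_neg (hppos i) (hFd i)
    linarith [hFe i]
  constructor
  · exact Matrix.posDef_diagonal_iff.mpr hppos
  · rw [Matrix.posDef_iff_dotProduct_mulVec]
    constructor
    · -- Hermitian
      rw [Matrix.IsHermitian, Matrix.conjTranspose_eq_transpose_of_trivial]
      ext i j
      simp only [Matrix.neg_apply, Matrix.transpose_apply]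
      rw [hSsymm]
    · intro x hx
      have hxr : (star x : Fin n → ℝ) = x := by
        funext i; simp
      rw [hxr]
      have hquad : x ⬝ᵥ S.mulVec x < 0 := by
        -- key comparison
        have key : x ⬝ᵥ S.mulVec x ≤ ∑ i, (x i ^ 2 / d i) * S.mulVec d i := by
          have expand : x ⬝ᵥ S.mulVec x = ∑ i, ∑ j, x i * (S i j * x j) := by
            simp [Matrix.mulVec, dotProduct, Finset.mul_sum]
          have expand2 : ∑ i, (x i ^ 2 / d i) * S.mulVec d i
              = ∑ i, ∑ j, (x i ^ 2 / d i) * (S i j * d j) := by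
            simp [Matrix.mulVec, dotProduct, Finset.mul_sum]
          rw [expand, expand2, ← sub_nonneg, ← Finset.sum_sub_distrib]
          simp_rw [← Finset.sum_sub_distrib]
          set f : Fin n → Fin n → ℝ :=
            fun i j => (x i ^ 2 / d i) * (S i j * d j) - x i * (S i j * x j) with hf
          have hpair : ∀ i j, 0 ≤ f i j + f j i := by
            intro i j
            have hsym := hSsymm i j
            have : f i j + f j i
                = S i j * ((x i * d j - x j * d i) ^ 2 / (d i * d j)) := by
              have hdi := (hd i).ne'
              have hdj := (hd j).ne'
              simp only [hf, hsym]
              field_simp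
              ring
            rw [this]
            rcases eq_or_ne i j with rfl | hij
            · simp
            · have h1 := hSoff i j hij
              have h2 : (0:ℝ) < d i * d j := mul_pos (hd i) (hd j)
              positivity
          have h2sum : 0 ≤ (∑ i, ∑ j, f i j) + ∑ i, ∑ j, f i j := by
            nth_rewrite 2 [Finset.sum_comm]
            rw [← Finset.sum_add_distrib]
            simp_rw [← Finset.sum_add_distrib]
            apply Finset.sum_nonneg; intro i _
            apply Finset.sum_nonneg; intro j _
            exact hpair i j
          linarith
        have hlt : ∑ i, (x i ^ 2 / d i) * S.mulVec d i < 0 := by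
          obtain ⟨i0, hi0⟩ := Function.ne_iff.mp hx
          have : ∑ i, (x i ^ 2 / d i) * S.mulVec d i < ∑ _i : Fin n, (0:ℝ) := by
            apply Finset.sum_lt_sum
            · intro i _
              have h1 : 0 ≤ x i ^ 2 / d i := div_nonneg (sq_nonneg _) (hd i).le
              exact mul_nonpos_of_nonneg_of_nonpos h1 (hSd i).le
            · refine ⟨i0, Finset.mem_univ _, ?_⟩
              have h1 : 0 < x i0 ^ 2 / d i0 := by
                have : x i0 ^ 2 > 0 := sq_pos_of_ne_zero hi0
                exact div_pos this (hd i0)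
              exact mul_neg_of_pos_of_neg h1 (hSd i0)
          simpa using this
        linarith
      have : x ⬝ᵥ (-S).mulVec x = -(x ⬝ᵥ S.mulVec x) := by
        simp [Matrix.neg_mulVec]
      rw [this]
      linarith
end

section
/- Let Y be a symmetric block matrix Y = [[−Γ, 0],[0, −Ξ]] congruence-transformed as T ᵀ [[−Γ,0],[0,−Ξ]] T with T = [[I, 0],[D, I]], where Γ ∈ ℝ^{m×m}, Ξ ∈ ℝ^{p×p} are symmetric and D ∈ ℝ^{p×m}. Suppose δ² I − Γ ⪰ Υ and I − Ξ ⪰ Λ for positive semidefinite Υ, Λ, and the block matrix [[Υ, −Dᵀ],[−D, Λ]] ⪰ 0. Then Y ⪰ [[DᵀD − δ² I, 0],[0, −I]]. -/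
open Matrix

/-- the key step (cond_y) in the proof of Theorem 3.1. With
`T = [[I,0],[D,I]]` and `Y = Tᵀ [[−Γ,0],[0,−Ξ]] T`, the hypotheses
`δ²I − Γ ⪰ Υ`, `I − Ξ ⪰ Λ`, `Υ, Λ ⪰ 0`, and `[[Υ, −Dᵀ],[−D, Λ]] ⪰ 0`
imply `Y ⪰ [[DᵀD − δ²I, 0],[0, −I]]`. -/
theorem cond_y_bound {m p : ℕ} (Γ : Matrix (Fin m) (Fin m) ℝ)
    (Ξ : Matrix (Fin p) (Fin p) ℝ) (D : Matrix (Fin p) (Fin m) ℝ)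
    (Υ : Matrix (Fin m) (Fin m) ℝ) (Λ : Matrix (Fin p) (Fin p) ℝ) (δ : ℝ)
    (hΓ : Γ.IsSymm) (hΞ : Ξ.IsSymm)
    (hΥ : Υ.PosSemidef) (hΛ : Λ.PosSemidef)
    (hΓΥ : (δ ^ 2 • (1 : Matrix (Fin m) (Fin m) ℝ) - Γ - Υ).PosSemidef)
    (hΞΛ : ((1 : Matrix (Fin p) (Fin p) ℝ) - Ξ - Λ).PosSemidef)
    (hblock : (Matrix.fromBlocks Υ (-Dᵀ) (-D) Λ).PosSemidef) :
    ((Matrix.fromBlocks (1 : Matrix (Fin m) (Fin m) ℝ) 0 D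
          (1 : Matrix (Fin p) (Fin p) ℝ))ᵀ
        * Matrix.fromBlocks (-Γ) 0 0 (-Ξ)
        * Matrix.fromBlocks (1 : Matrix (Fin m) (Fin m) ℝ) 0 D
            (1 : Matrix (Fin p) (Fin p) ℝ)
      - Matrix.fromBlocks (Dᵀ * D - δ ^ 2 • (1 : Matrix (Fin m) (Fin m) ℝ)) 0 0
          (-(1 : Matrix (Fin p) (Fin p) ℝ))).PosSemidef := by
  have key :
      ((Matrix.fromBlocks (1 : Matrix (Fin m) (Fin m) ℝ) 0 D
          (1 : Matrix (Fin p) (Fin p) ℝ))ᵀ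
        * Matrix.fromBlocks (-Γ) 0 0 (-Ξ)
        * Matrix.fromBlocks (1 : Matrix (Fin m) (Fin m) ℝ) 0 D
            (1 : Matrix (Fin p) (Fin p) ℝ)
      - Matrix.fromBlocks (Dᵀ * D - δ ^ 2 • (1 : Matrix (Fin m) (Fin m) ℝ)) 0 0
          (-(1 : Matrix (Fin p) (Fin p) ℝ)))
      = (Matrix.fromBlocks (1 : Matrix (Fin m) (Fin m) ℝ) 0 D 1)ᵀ
          * Matrix.fromBlocks Υ (-Dᵀ) (-D) Λ
          * Matrix.fromBlocks 1 0 D 1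
        + Matrix.fromBlocks (δ ^ 2 • (1 : Matrix (Fin m) (Fin m) ℝ) - Γ - Υ) 0 0 0
        + (fromCols D (1 : Matrix (Fin p) (Fin p) ℝ))ᵀ
          * ((1 : Matrix (Fin p) (Fin p) ℝ) - Ξ - Λ)
          * fromCols D (1 : Matrix (Fin p) (Fin p) ℝ) := by
    rw [sub_eq_add_neg]
    simp only [fromBlocks_transpose, fromBlocks_multiply, transpose_fromCols,
      fromRows_mul, fromRows_mul_fromCols, fromBlocks_add, fromBlocks_neg,
      mul_fromCols, fromRows_fromCols_eq_fromBlocks,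
      fromCols_fromRows_eq_fromBlocks,
      transpose_one, transpose_zero, Matrix.one_mul, Matrix.mul_one, Matrix.mul_zero,
      Matrix.zero_mul, add_zero, zero_add]
    rw [fromBlocks_inj]
    refine ⟨?_, ?_, ?_, ?_⟩ <;>
      simp only [Matrix.sub_mul, Matrix.mul_sub, Matrix.add_mul, Matrix.mul_add,
        Matrix.one_mul, Matrix.mul_one, Matrix.neg_mul, Matrix.mul_neg,
        Matrix.mul_assoc, neg_sub, neg_neg, neg_zero] <;>
      abel
  rw [key]
  have hdiag : (Matrix.fromBlocks (δ ^ 2 • (1 : Matrix (Fin m) (Fin m) ℝ) - Γ - Υ)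
      0 0 (0 : Matrix (Fin p) (Fin p) ℝ)).PosSemidef := by
    have h := hΓΥ.conjTranspose_mul_mul_same
      (fromCols (1 : Matrix (Fin m) (Fin m) ℝ) (0 : Matrix (Fin m) (Fin p) ℝ))
    have he : (fromCols (1 : Matrix (Fin m) (Fin m) ℝ)
          (0 : Matrix (Fin m) (Fin p) ℝ))ᴴ
        * (δ ^ 2 • (1 : Matrix (Fin m) (Fin m) ℝ) - Γ - Υ)
        * fromCols (1 : Matrix (Fin m) (Fin m) ℝ) (0 : Matrix (Fin m) (Fin p) ℝ)
        = Matrix.fromBlocks (δ ^ 2 • (1 : Matrix (Fin m) (Fin m) ℝ) - Γ - Υ) 0 0 0 := by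
      rw [conjTranspose_eq_transpose_of_trivial]
      simp only [transpose_fromCols, fromRows_mul, fromRows_mul_fromCols,
        mul_fromCols, fromRows_fromCols_eq_fromBlocks, fromCols_fromRows_eq_fromBlocks,
        transpose_one, transpose_zero, Matrix.one_mul, Matrix.mul_one,
        Matrix.mul_zero, Matrix.zero_mul]
      ext (i | i) (j | j) <;>
        simp [Matrix.fromBlocks, fromRows_apply_inl, fromRows_apply_inr, fromCols_apply_inl, fromCols_apply_inr]
    rwa [he] at h
  have h1 := hblock.conjTranspose_mul_mul_same
    (Matrix.fromBlocks (1 : Matrix (Fin m) (Fin m) ℝ) (0 : Matrix (Fin m) (Fin p) ℝ) D 1)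
  rw [conjTranspose_eq_transpose_of_trivial] at h1
  have h2 := hΞΛ.conjTranspose_mul_mul_same
    (fromCols D (1 : Matrix (Fin p) (Fin p) ℝ))
  rw [conjTranspose_eq_transpose_of_trivial] at h2
  exact (h1.add hdiag).add h2
end

section
/- Let F be an n×n Metzler Hurwitz matrix and d ∈ ℝⁿ a strictly positive vector with F d < 0 entrywise. Then V(ξ) = max_{1≤i≤n} ξᵢ/dᵢ is strictly decreasing along solutions of ξ̇ = F ξ starting in the open positive orthant: if ξ(t) > 0 entrywise and ξ(t) ≠ 0, then the upper-right Dini derivative of V(ξ(t)) along the flow is negative. -/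
open Matrix

/-- the max-separable function `V(ξ) = maxᵢ ξᵢ/dᵢ` strictly
decreases along trajectories of `ξ̇ = F ξ` in the open positive orthant:
its upper-right Dini derivative along the flow is negative. -/
theorem max_separable_lyapunov_decreasing {n : ℕ} (hn : 0 < n)
    (F : Matrix (Fin n) (Fin n) ℝ)
    (hMetzler : ∀ i j, i ≠ j → 0 ≤ F i j) (hHurwitz : IsHurwitz F)
    (d : Fin n → ℝ) (hd : ∀ i, 0 < d i) (hFd : ∀ i, F.mulVec d i < 0)
    (ξ : ℝ → (Fin n → ℝ)) (hξ : ∀ s : ℝ, HasDerivAt ξ (F.mulVec (ξ s)) s)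
    (t : ℝ) (hpos : ∀ i, 0 < ξ t i) (hne : ξ t ≠ 0) :
    Filter.limsup
        (fun h : ℝ =>
          ((⨆ i, ξ (t + h) i / d i) - (⨆ i, ξ t i / d i)) / h)
        (nhdsWithin 0 (Set.Ioi 0)) < 0 := by
  haveI : Nonempty (Fin n) := Fin.pos_iff_nonempty.mp hn
  set V : ℝ := ⨆ i, ξ t i / d i with hV
  -- V is positive
  obtain ⟨i₀, hi₀⟩ := exists_eq_ciSup_of_finite (f := fun i => ξ t i / d i)
  have hVpos : 0 < V := by
    rw [hV, ← hi₀]; exact div_pos (hpos i₀) (hd i₀)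
  have hle : ∀ j, ξ t j ≤ V * d j := by
    intro j
    have : ξ t j / d j ≤ V :=
      le_ciSup (f := fun j => ξ t j / d j) (Set.Finite.bddAbove (Set.finite_range _)) j
    calc ξ t j = (ξ t j / d j) * d j := (div_mul_cancel₀ _ (hd j).ne').symm
    _ ≤ V * d j := by nlinarith [hd j]
  -- derivative of each coordinate / d i
  set D : Fin n → ℝ := fun i => F.mulVec (ξ t) i / d i with hD
  -- active indices have negative D
  have hDneg : ∀ i, ξ t i / d i = V → D i < 0 := by
    intro i hi
    have hxi : ξ t i = V * d i := by
      rw [← hi, div_mul_cancel₀ _ (hd i).ne']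
    have hsum : F.mulVec (ξ t) i ≤ V * F.mulVec d i := by
      simp only [mulVec, dotProduct]
      rw [Finset.mul_sum]
      apply Finset.sum_le_sum
      intro j _
      rcases eq_or_ne i j with rfl | hij
      · rw [hxi]; ring_nf; exact le_of_eq (by ring)
      · have := hMetzler i j (fun h => hij h)
        have := hle j
        nlinarith
    have : V * F.mulVec d i < 0 := mul_neg_of_pos_of_neg hVpos (hFd i)
    have : F.mulVec (ξ t) i < 0 := lt_of_le_of_lt hsum this
    exact div_neg_of_neg_of_pos this (hd i)
  -- the bound c
  set A : Finset (Fin n) := Finset.univ.filter (fun i => ξ t i / d i = V) with hA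
  have hAne : A.Nonempty := ⟨i₀, by simp [hA, hi₀]; exact hV.symm⟩
  set M : ℝ := A.sup' hAne D with hM
  have hMneg : M < 0 := by
    rw [hM, Finset.sup'_lt_iff]
    intro i hi
    exact hDneg i (by simpa [hA] using hi)
  set c : ℝ := M / 2 with hc
  have hcneg : c < 0 := by rw [hc]; linarith
  have hMc : M < c := by rw [hc]; linarith
  -- each coordinate function
  have hg : ∀ i, HasDerivAt (fun h : ℝ => ξ (t + h) i / d i) (D i) 0 := by
    intro i
    have h1 : HasDerivAt (fun h : ℝ => t + h) 1 0 := by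
      simpa using (hasDerivAt_id (0:ℝ)).const_add t
    have h2 : HasDerivAt ξ (F.mulVec (ξ t)) (t + 0) := by simpa using hξ t
    have h3 : HasDerivAt (fun h : ℝ => ξ (t + h)) (F.mulVec (ξ t)) 0 := by
      have := (h2.scomp (0:ℝ) h1 : HasDerivAt (fun h : ℝ => ξ (t + h)) ((1:ℝ) • F.mulVec (ξ t)) 0)
      rw [one_smul] at this; exact this
    have h4 : HasDerivAt (fun h : ℝ => ξ (t + h) i) (F.mulVec (ξ t) i) 0 :=
      hasDerivAt_pi.mp h3 i
    simpa [hD] using h4.div_const (d i)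
  have hslope : ∀ i, Filter.Tendsto (slope (fun h : ℝ => ξ (t + h) i / d i) 0)
      (nhdsWithin 0 (Set.Ioi 0)) (nhds (D i)) := by
    intro i
    have := ((hg i).hasDerivWithinAt (s := Set.Ioi (0:ℝ)))
    rw [hasDerivWithinAt_iff_tendsto_slope] at this
    rwa [Set.diff_singleton_eq_self (by simp)] at this
  -- eventually each coordinate is ≤ V + c * h
  have key : ∀ i, ∀ᶠ h in nhdsWithin 0 (Set.Ioi 0),
      ξ (t + h) i / d i ≤ V + c * h := by
    intro i
    rcases eq_or_lt_of_le (le_ciSup (Set.Finite.bddAbove (Set.finite_range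
        (fun j => ξ t j / d j))) i : ξ t i / d i ≤ V) with hi | hi
    · -- active: use derivative
      have hDi : D i ≤ M := Finset.le_sup' D (by simp [hA, hi]; exact hV.symm)
      have hDc : D i < c := lt_of_le_of_lt hDi hMc
      have hev : ∀ᶠ h in nhdsWithin 0 (Set.Ioi 0),
          slope (fun h : ℝ => ξ (t + h) i / d i) 0 h < c :=
        (hslope i).eventually_lt_const hDc
      filter_upwards [hev, self_mem_nhdsWithin] with h hh hhpos
      have hhpos' : (0:ℝ) < h := hhpos
      rw [slope_def_field, add_zero, sub_zero] at hh
      have : ξ (t + h) i / d i - ξ t i / d i < c * h := by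
        have := (div_lt_iff₀ hhpos').mp hh
        linarith
      rw [hi] at this; linarith
    · -- inactive: continuity
      have hcont : Filter.Tendsto (fun h : ℝ => ξ (t + h) i / d i)
          (nhdsWithin 0 (Set.Ioi 0)) (nhds (ξ t i / d i)) := by
        have := (hg i).continuousAt.continuousWithinAt (s := Set.Ioi (0:ℝ))
        simpa using this.tendsto
      have hrhs : Filter.Tendsto (fun h : ℝ => V + c * h)
          (nhdsWithin 0 (Set.Ioi 0)) (nhds V) := by
        have : Filter.Tendsto (fun h : ℝ => V + c * h) (nhds 0) (nhds (V + c * 0)) := by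
          exact (continuous_const.add (continuous_const.mul continuous_id)).tendsto 0
        simpa using this.mono_left nhdsWithin_le_nhds
      have := hcont.eventually_lt hrhs hi
      exact this.mono fun h hh => le_of_lt hh
  -- combine
  have hbound : ∀ᶠ h in nhdsWithin 0 (Set.Ioi 0),
      ((⨆ i, ξ (t + h) i / d i) - V) / h ≤ c := by
    have hall := Filter.eventually_all.mpr key
    filter_upwards [hall, self_mem_nhdsWithin] with h hh hhpos
    have hhpos' : (0:ℝ) < h := hhpos
    have hsup : (⨆ i, ξ (t + h) i / d i) ≤ V + c * h := ciSup_le fun i => hh i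
    rw [div_le_iff₀ hhpos']
    linarith
  have hcb : Filter.IsCoboundedUnder (· ≤ ·) (nhdsWithin 0 (Set.Ioi 0))
      (fun h : ℝ => ((⨆ i, ξ (t + h) i / d i) - V) / h) := by
    apply Filter.isCoboundedUnder_le_of_eventually_le (nhdsWithin 0 (Set.Ioi 0)) (x := D i₀ - 1)
    have hev : ∀ᶠ h in nhdsWithin 0 (Set.Ioi 0),
        D i₀ - 1 < slope (fun h : ℝ => ξ (t + h) i₀ / d i₀) 0 h :=
      (hslope i₀).eventually_const_lt (by linarith)
    filter_upwards [hev, self_mem_nhdsWithin] with h hh hhpos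
    have hhpos' : (0:ℝ) < h := hhpos
    rw [slope_def_field, add_zero, sub_zero, hi₀, ← hV] at hh
    have hsup : ξ (t + h) i₀ / d i₀ ≤ ⨆ i, ξ (t + h) i / d i :=
      le_ciSup (f := fun i => ξ (t + h) i / d i)
        (Set.Finite.bddAbove (Set.finite_range _)) i₀
    have h2 : (ξ (t + h) i₀ / d i₀ - V) / h ≤ ((⨆ i, ξ (t + h) i / d i) - V) / h := by
      have : ξ (t + h) i₀ / d i₀ ≤ ⨆ i, ξ (t + h) i / d i := hsup
      gcongr <;> linarith
    linarith
  have := Filter.limsup_le_of_le hcb hbound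
  exact lt_of_le_of_lt this hcneg
end
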